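/- Let F be a quartic number field which is a quadratic extension of an imaginary quadratic field K. Then g(s) = g(1/s) for every s > 0; this expresses that the size function h⁰ is symmetric on the connected component 𝕋⁰ of the identity of the Arakelov class group. -/

import Mathlib

open NumberField nonZeroDivisors MeasureTheory

noncomputable section

/-- `‖ux‖² = 2u₁²|σ(x)|² + 2u₂²|σ'(x)|²` for `u = (u₁, u₂)`. -/
def normSq2 {F : Type*} [Field F] (σ σ' : F →+* ℂ) (u₁ u₂ : ℝ) (x : F) : ℝ :=
  2 * u₁ ^ 2 * ‖σ x‖ ^ 2 + 2 * u₂ ^ 2 * ‖σ' x‖ ^ 2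

/-- `N(x) = |σ(x)|²·|σ'(x)|²`, the absolute value of the norm of `x`. -/
def absN {F : Type*} [Field F] (σ σ' : F →+* ℂ) (x : F) : ℝ :=
  ‖σ x‖ ^ 2 * ‖σ' x‖ ^ 2

/-- `ε` is a fundamental unit: every unit is `ζ · εᵏ` with `ζ` a root of unity. -/
def IsFundamentalUnit {F : Type*} [Field F] [NumberField F] (ε : (𝓞 F)ˣ) : Prop :=
  ∀ u : (𝓞 F)ˣ, ∃ (ζ : (𝓞 F)ˣ) (k : ℤ), (∃ n : ℕ, 0 < n ∧ ζ ^ n = 1) ∧ u = ζ * ε ^ k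

/-- `g(s) = k⁰((O_F, (s, 1/s)))`. -/
def gfun {F : Type*} [Field F] [NumberField F] (σ σ' : F →+* ℂ) (s : ℝ) : ℝ :=
  ∑' x : 𝓞 F, Real.exp (-Real.pi * normSq2 σ σ' s (1 / s) (x : F))

lemma eq_or_eq_of_card_two {α : Type*} [Fintype α] [DecidableEq α]
    (h : Fintype.card α = 2) {a b : α} (hab : a ≠ b) (c : α) : c = a ∨ c = b := by
  by_contra hc
  push_neg at hc
  have h3 : ({c, a, b} : Finset α).card ≤ 2 := h ▸ Finset.card_le_univ _
  rw [Finset.card_insert_of_notMem (by simp [hc.1, hc.2]),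
    Finset.card_insert_of_notMem (by simp [hab])] at h3
  simp at h3

open Polynomial in
lemma normal_of_finrank_two (K F : Type*) [Field K] [Field F] [Algebra K F]
    (h : Module.finrank K F = 2) : Normal K F := by
  have : FiniteDimensional K F := FiniteDimensional.of_finrank_pos (by omega)
  refine normal_iff.mpr fun x => ?_
  have hint : IsIntegral K x := Algebra.IsIntegral.isIntegral x
  refine ⟨hint, ?_⟩
  set p := minpoly K x with hp
  have hp0 : p ≠ 0 := minpoly.ne_zero hint
  have hmap0 : p.map (algebraMap K F) ≠ 0 := by
    simpa using hp0
  have hdeg : p.natDegree ≤ 2 := h ▸ minpoly.natDegree_le x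
  have hroot : (p.map (algebraMap K F)).IsRoot x := by
    simp [p, IsRoot, eval_map, ← aeval_def]
  obtain ⟨q, hq⟩ := dvd_iff_isRoot.mpr hroot
  have hq0 : q ≠ 0 := by rintro rfl; simp [hq] at hmap0
  have hdq : q.natDegree ≤ 1 := by
    have := natDegree_mul (X_sub_C_ne_zero x) hq0
    rw [← hq, natDegree_map, natDegree_X_sub_C] at this
    omega
  rw [hq]
  exact (Splits.X_sub_C x).mul (Splits.of_natDegree_le_one_of_invertible hdq
    (invertibleOfNonzero (leadingCoeff_ne_zero.mpr hq0)))

/-- `h⁰` is symmetric on the connected component `𝕋⁰`: `g(s) = g(1/s)`. -/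
theorem stmt4
    (F K : Type*) [Field F] [NumberField F] [Field K] [NumberField K]
    [Algebra K F] [IsScalarTower ℚ K F]
    (hquartic : Module.finrank ℚ F = 4)
    (hquad : Module.finrank K F = 2)
    (hKim : ∀ φ : K →+* ℂ, ∃ x, (φ x).im ≠ 0)
    (σ σ' : F →+* ℂ)
    (hplaces : InfinitePlace.mk σ ≠ InfinitePlace.mk σ')
 :
    ∀ s : ℝ, 0 < s → gfun σ σ' s = gfun σ σ' (1 / s) := by
  intro s hs
  have hFD : FiniteDimensional K F := FiniteDimensional.right ℚ K F
  have hnormal : Normal K F := normal_of_finrank_two K F hquad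
  have hgal : IsGalois K F := ⟨⟩
  -- K has a unique infinite place
  have hK2 : Module.finrank ℚ K = 2 := by
    have := Module.finrank_mul_finrank ℚ K F
    rw [hquad, hquartic] at this
    omega
  have hKsub : Subsingleton (InfinitePlace K) := by
    classical
    refine ⟨fun w w' => ?_⟩
    set φ := w.embedding with hφ
    have hnr : ComplexEmbedding.conjugate φ ≠ φ := by
      intro h
      obtain ⟨x, hx⟩ := hKim φ
      have : (starRingEnd ℂ) (φ x) = φ x := RingHom.congr_fun h x
      rw [Complex.conj_eq_iff_im] at this
      exact hx this
    have hcardK : Fintype.card (K →+* ℂ) = 2 := by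
      rw [NumberField.Embeddings.card K ℂ, hK2]
    have := eq_or_eq_of_card_two hcardK hnr w'.embedding
    have hmk : InfinitePlace.mk w'.embedding = InfinitePlace.mk φ := by
      rcases this with h | h
      · rw [h, InfinitePlace.mk_conjugate_eq]
      · rw [h]
    rw [← InfinitePlace.mk_embedding w, ← InfinitePlace.mk_embedding w', hmk]
  have hcomap : (InfinitePlace.mk σ).comap (algebraMap K F)
      = (InfinitePlace.mk σ').comap (algebraMap K F) := Subsingleton.elim _ _
  obtain ⟨τ, hτ⟩ := InfinitePlace.exists_smul_eq_of_comap_eq hcomap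
  have hτ2 : τ ^ 2 = 1 := by
    have hc : Fintype.card (F ≃ₐ[K] F) = 2 := by
      rw [← Nat.card_eq_fintype_card, IsGalois.card_aut_eq_finrank, hquad]
    calc τ ^ 2 = τ ^ Fintype.card (F ≃ₐ[K] F) := by rw [hc]
    _ = 1 := pow_card_eq_one
  have hτ' : τ • InfinitePlace.mk σ' = InfinitePlace.mk σ := by
    rw [← hτ, ← mul_smul, ← sq, hτ2, one_smul]
  -- pointwise consequences
  have h1 : ∀ x : F, ‖σ (τ.symm x)‖ = ‖σ' x‖ := fun x => by
    have := congrFun (congrArg (fun w : InfinitePlace F => (w : F → ℝ)) hτ) x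
    simpa [InfinitePlace.apply] using this
  have h2 : ∀ x : F, ‖σ' (τ.symm x)‖ = ‖σ x‖ := fun x => by
    have := congrFun (congrArg (fun w : InfinitePlace F => (w : F → ℝ)) hτ') x
    simpa [InfinitePlace.apply] using this
  have hs' : (1 : ℝ) / (1 / s) = s := one_div_one_div s
  let e : 𝓞 F ≃+* 𝓞 F := RingOfIntegers.mapRingEquiv (τ.symm : F ≃+* F)
  have he : ∀ x : 𝓞 F, ((e x : 𝓞 F) : F) = τ.symm (x : F) := fun x => rfl
  unfold gfun
  rw [hs']
  refine (Equiv.tsum_eq e.toEquiv _).symm.trans (tsum_congr fun x => ?_)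
  congr 1
  simp only [RingEquiv.toEquiv_eq_coe, EquivLike.coe_coe, he]
  unfold normSq2
  rw [h1, h2]
  ring
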